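/- Let m, k be integers with 1 ≤ k ≤ m, let S be a nonempty subset of {1,...,k}, and let f_{(m,k)} be the associated function on 𝔽_3^m. Then the real part of the Walsh transform of f_{(m,k)} at the zero vector equals 3^m - (3/2)·Σ_{j=1}^{k} 2^j·C(m, j). -/

import Mathlib

open Finset

/-- `ζ = exp(2πi/3)`, a primitive cube root of unity. -/
noncomputable def zeta3 : ℂ := Complex.exp (2 * Real.pi * Complex.I / 3)

/-- The Walsh transform of `h : 𝔽_3^m → 𝔽_3` at `w ∈ 𝔽_3^m`:
`ĥ(w) = Σ_{x ∈ 𝔽_3^m} ζ^{h(x) - w·x}`. -/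
noncomputable def walsh {m : ℕ} (h : (Fin m → ZMod 3) → ZMod 3)
    (w : Fin m → ZMod 3) : ℂ :=
  ∑ x : Fin m → ZMod 3, zeta3 ^ (h x - ∑ i, w i * x i).val

/-- The function `f_{(m,k)} : 𝔽_3^m → 𝔽_3` attached to a subset `S ⊆ {1,…,k}`:
`-1` if `wt(x) ∈ S`, `1` if `wt(x) ∈ {1,…,k} \ S`, `0` otherwise. -/
def fmk {m : ℕ} (k : ℕ) (S : Finset ℕ) (x : Fin m → ZMod 3) : ZMod 3 :=
  if hammingNorm x ∈ S then -1
  else if hammingNorm x ∈ Finset.Icc 1 k then 1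
  else 0

/-- For `1 ≤ k ≤ m` and `∅ ≠ S ⊆ {1,…,k}`,
`Re(f̂_{(m,k)}(0)) = 3^m - (3/2)·Σ_{j=1}^{k} 2^j·C(m,j)`. -/
lemma hn_cons {m : ℕ} (a : ZMod 3) (x : Fin m → ZMod 3) :
    hammingNorm (Fin.cons a x : Fin (m+1) → ZMod 3) = (if a = 0 then 0 else 1) + hammingNorm x := by
  simp only [hammingNorm, Finset.card_filter]
  rw [Fin.sum_univ_succ]
  simp [Fin.cons]
  congr 1
  · by_cases ha : a = 0 <;> simp [ha]
  · exact Finset.sum_congr rfl fun i _ => by by_cases hi : x i = 0 <;> simp [hi]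

lemma count_wt (m j : ℕ) :
    ((univ : Finset (Fin m → ZMod 3)).filter (fun x => hammingNorm x = j)).card
      = m.choose j * 2 ^ j := by
  induction m generalizing j with
  | zero =>
    cases j with
    | zero =>
      simp only [hammingNorm_eq_zero, Finset.filter_eq', Finset.mem_univ, if_true]
      simp
    | succ n =>
      simp only [Nat.choose_zero_succ, zero_mul, Finset.card_eq_zero,
        Finset.filter_eq_empty_iff]
      intro x _
      rw [Subsingleton.elim x (0 : Fin 0 → ZMod 3), hammingNorm_zero]
      omega
  | succ m ih =>
    rw [Finset.card_filter]
    rw [← Equiv.sum_comp (Fin.consEquiv fun _ => ZMod 3)]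
    rw [Fintype.sum_prod_type]
    have key : ∀ a : ZMod 3, ∀ x : Fin m → ZMod 3,
        (if hammingNorm ((Fin.consEquiv fun _ => ZMod 3) (a, x)) = j then 1 else 0)
          = (if (if a = 0 then 0 else 1) + hammingNorm x = j then 1 else 0) := by
      intro a x
      simp [Fin.consEquiv, hn_cons]
    simp only [key]
    rw [show (Finset.univ : Finset (ZMod 3)) = {0, 1, 2} from by decide]
    rw [Finset.sum_insert (by decide), Finset.sum_insert (by decide), Finset.sum_singleton]
    norm_num
    have h1 : ∀ i, (∑ x : Fin m → ZMod 3, if hammingNorm x = i then (1:ℕ) else 0)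
        = m.choose i * 2 ^ i := by
      intro i; rw [← Finset.card_filter]; exact ih i
    cases j with
    | zero =>
      norm_num
      simp [Finset.filter_eq', show ¬((2:ZMod 3) = 0) from by decide]
    | succ n =>
      rw [if_neg (show ¬((2:ZMod 3) = 0) from by decide)]
      have e : (filter (fun x : Fin m → ZMod 3 => 1 + hammingNorm x = n + 1) univ)
          = filter (fun x => hammingNorm x = n) univ := by
        apply Finset.filter_congr
        intro x _
        omega
      rw [e, ih, ih, Nat.choose_succ_succ]
      ring

lemma zeta3_re : zeta3.re = -(1/2) := by
  have : (2 * Real.pi * Complex.I / 3) = ((2 * Real.pi / 3 : ℝ) : ℂ) * Complex.I := by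
    push_cast; ring
  rw [zeta3, this, Complex.exp_ofReal_mul_I_re]
  have : 2 * Real.pi / 3 = Real.pi - Real.pi / 3 := by ring
  rw [this, Real.cos_pi_sub, Real.cos_pi_div_three]

lemma zeta3_sq_re : (zeta3 ^ 2).re = -(1/2) := by
  have : zeta3 ^ 2 = Complex.exp (((4 * Real.pi / 3 : ℝ) : ℂ) * Complex.I) := by
    rw [zeta3, ← Complex.exp_nat_mul]
    congr 1
    push_cast; ring
  rw [this, Complex.exp_ofReal_mul_I_re]
  have : 4 * Real.pi / 3 = 2 * Real.pi - 2 * Real.pi / 3 := by ring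
  rw [this, Real.cos_two_pi_sub]
  have : 2 * Real.pi / 3 = Real.pi - Real.pi / 3 := by ring
  rw [this, Real.cos_pi_sub, Real.cos_pi_div_three]

theorem stmt_6 (m k : ℕ) (hk1 : 1 ≤ k) (hkm : k ≤ m)
    (S : Finset ℕ) (hS : S.Nonempty) (hSsub : S ⊆ Finset.Icc 1 k) :
    (walsh (fmk (m := m) k S) 0).re =
      3 ^ m - 3 / 2 * ∑ j ∈ Finset.Icc 1 k, (2 : ℝ) ^ j * (m.choose j : ℝ) := by
  have hw : walsh (fmk (m := m) k S) 0 = ∑ x : Fin m → ZMod 3, zeta3 ^ (fmk k S x).val := by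
    unfold walsh
    simp
  rw [hw, Complex.re_sum]
  have hre : ∀ x : Fin m → ZMod 3, (zeta3 ^ (fmk k S x).val).re
      = if hammingNorm x ∈ Finset.Icc 1 k then -(1/2 : ℝ) else 1 := by
    intro x
    by_cases h1 : hammingNorm x ∈ S
    · rw [fmk, if_pos h1, if_pos (hSsub h1),
        show ((-1 : ZMod 3)).val = 2 from rfl]
      exact zeta3_sq_re
    · rw [fmk, if_neg h1]
      by_cases h2 : hammingNorm x ∈ Finset.Icc 1 k
      · rw [if_pos h2, if_pos h2, show ((1 : ZMod 3)).val = 1 from rfl, pow_one]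
        exact zeta3_re
      · rw [if_neg h2, if_neg h2, show ((0 : ZMod 3)).val = 0 from rfl, pow_zero,
          Complex.one_re]
  simp only [hre]
  have step2 : ∀ x : Fin m → ZMod 3,
      (if hammingNorm x ∈ Finset.Icc 1 k then -(1/2 : ℝ) else 1)
        = 1 - (3/2) * (if hammingNorm x ∈ Finset.Icc 1 k then (1:ℝ) else 0) := by
    intro x
    by_cases h : hammingNorm x ∈ Finset.Icc 1 k <;> simp [h] <;> norm_num
  simp only [step2]
  rw [Finset.sum_sub_distrib, ← Finset.mul_sum, Finset.sum_boole, Finset.sum_const]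
  have hcard1 : (Finset.univ : Finset (Fin m → ZMod 3)).card = 3 ^ m := by
    simp [Finset.card_univ]
  have hsplit : (Finset.univ.filter
        (fun x : Fin m → ZMod 3 => hammingNorm x ∈ Finset.Icc 1 k))
      = (Finset.Icc 1 k).biUnion
          (fun j => Finset.univ.filter (fun x : Fin m → ZMod 3 => hammingNorm x = j)) := by
    ext x
    simp
  have hdisj : ∀ a ∈ Finset.Icc 1 k, ∀ b ∈ Finset.Icc 1 k, a ≠ b →
      Disjoint (Finset.univ.filter (fun x : Fin m → ZMod 3 => hammingNorm x = a))
        (Finset.univ.filter (fun x : Fin m → ZMod 3 => hammingNorm x = b)) := by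
    intro a _ b _ hab
    simp only [Finset.disjoint_left, Finset.mem_filter, Finset.mem_univ, true_and]
    intro x h1 h2
    exact hab (h1 ▸ h2 ▸ rfl)
  have hcard2 : (Finset.univ.filter
        (fun x : Fin m → ZMod 3 => hammingNorm x ∈ Finset.Icc 1 k)).card
      = ∑ j ∈ Finset.Icc 1 k, m.choose j * 2 ^ j := by
    rw [hsplit, Finset.card_biUnion hdisj]
    exact Finset.sum_congr rfl fun j _ => count_wt m j
  rw [hcard1, hcard2]
  push_cast
  rw [Finset.sum_congr rfl (fun j _ => by ring :
    ∀ j ∈ Finset.Icc 1 k, (m.choose j : ℝ) * 2 ^ j = 2 ^ j * (m.choose j : ℝ))]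
  simp
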